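/- Work in the good-parity setting, half-integer case. Let y₀ ∈ ℕ + 1/2, and let (𝔪, ε) be the signed symmetric multisegment with 𝔪 = Σ_{y=1/2}^{y₀} [−y,y] (y running over half-integers 1/2, 3/2, …, y₀), with ε([−1/2,1/2]) = −1 and ε([−y,y])·ε([−y+1,y−1]) = −1 for all 1/2 < y ≤ y₀. Then AD(𝔪, ε) = (𝔪, ε). -/

import Mathlib

namespace AZ

/-- A segment in doubled coordinates: the pair `(a, b)` represents the segment
`[a/2, b/2]` whose endpoints lie in `(1/2)ℤ`.  Thus the end `e(Δ)` is `Δ.2 / 2`,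
the beginning `b(Δ)` is `Δ.1 / 2`, `Δ` is centered iff `Δ.1 + Δ.2 = 0`, and
`c(Δ) = 1/2` iff `Δ.1 + Δ.2 = 2`. -/
abbrev Seg := ℤ × ℤ

namespace Seg

/-- Well-formedness of a segment: `a ≤ b` and `a ≡ b [ZMOD 2]`, i.e. `b - a ∈ 2ℕ`. -/
def WF (Δ : Seg) : Prop := Δ.1 ≤ Δ.2 ∧ Δ.1 % 2 = Δ.2 % 2

/-- The dual (contragredient) segment `Δ∨ = [−b, −a]`. -/
def dual (Δ : Seg) : Seg := (-Δ.2, -Δ.1)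

/-- `Δ⁻` : the segment with its end removed. -/
def trimEnd (Δ : Seg) : Seg := (Δ.1, Δ.2 - 2)

/-- `⁻Δ` : the segment with its beginning removed. -/
def trimBeg (Δ : Seg) : Seg := (Δ.1 + 2, Δ.2)

/-- `⁺Δ` : the segment with its beginning extended. -/
def extBeg (Δ : Seg) : Seg := (Δ.1 - 2, Δ.2)

/-- The order on segments: `[x₁,y₁] ≤ [x₂,y₂]` iff `x₁ < x₂`, or `x₁ = x₂` and `y₁ ≥ y₂`. -/
def le (Δ₁ Δ₂ : Seg) : Prop := Δ₁.1 < Δ₂.1 ∨ (Δ₁.1 = Δ₂.1 ∧ Δ₂.2 ≤ Δ₁.2)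

end Seg

/-- Labels `≤0`, `=0`, `≥0` for labeled segments. -/
inductive Label
  | le0 | eq0 | ge0
deriving DecidableEq

/-- Numerical index of a label, used to order the labels `≤0 < =0 < ≥0`. -/
def Label.idx : Label → ℕ
  | .le0 => 0
  | .eq0 => 1
  | .ge0 => 2

/-- A labeled segment: a segment together with a label. -/
abbrev LSeg := Seg × Label

namespace LSeg

/-- The order `⪯` on labeled segments: segments labeled `≤0` precede those labeled `=0`,
which precede those labeled `≥0`; for equal labels `≥0` or `≤0` one compares the segments,
and for label `=0` one compares the ends. -/
def le (Λ₁ Λ₂ : LSeg) : Prop :=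
  Λ₁.2.idx < Λ₂.2.idx ∨
    (Λ₁.2 = Λ₂.2 ∧
      if Λ₁.2 = Label.eq0 then Λ₁.1.2 ≤ Λ₂.1.2 else Seg.le Λ₁.1 Λ₂.1)

/-- The strict order `≺` on labeled segments. -/
def lt (Λ₁ Λ₂ : LSeg) : Prop := LSeg.le Λ₁ Λ₂ ∧ Λ₁ ≠ Λ₂

/-- The contragredient of a labeled segment: for a centered segment the label `≤0`
becomes `≥0` and the labels `=0`, `≥0` are kept; for a non-centered segment the
label is flipped. -/
def dual (Λ : LSeg) : LSeg :=
  (Seg.dual Λ.1,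
    if Λ.1.1 + Λ.1.2 = 0 then (if Λ.2 = Label.le0 then Label.ge0 else Λ.2)
    else
      match Λ.2 with
      | Label.le0 => Label.ge0
      | Label.eq0 => Label.eq0
      | Label.ge0 => Label.le0)

end LSeg

/-- The forced label of a non-centered segment. -/
def forcedLabel (Δ : Seg) : Label := if 0 < Δ.1 + Δ.2 then Label.ge0 else Label.le0

/-- The labeling `s(𝔪)` of a multisegment: each non-centered segment gets its forced
label; a centered segment of multiplicity `m` contributes `⌊m/2⌋` copies labeled `≤0`,
`⌊m/2⌋` copies labeled `≥0`, and `m − 2⌊m/2⌋` copies labeled `=0`. -/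
def smap (m : Multiset Seg) : Multiset LSeg :=
  (m.filter fun Δ => ¬ Δ.1 + Δ.2 = 0).map (fun Δ => (Δ, forcedLabel Δ)) +
    (m.toFinset.filter fun Δ => Δ.1 + Δ.2 = 0).val.bind (fun Δ =>
      Multiset.replicate (m.count Δ / 2) (Δ, Label.le0) +
        Multiset.replicate (m.count Δ / 2) (Δ, Label.ge0) +
        Multiset.replicate (m.count Δ % 2) (Δ, Label.eq0))

/-- A labeled segment is special (the initial sequence stops there): `[0,0]` labeled
`≥0` or `=0` in the integer case; `[1/2,1/2]`, or `[−1/2,1/2]` labeled `≥0` or `=0`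
with `ε([−1/2,1/2]) = −1`, in the half-integer case. -/
def Special (ε : Seg → ℤ) (Λ : LSeg) : Prop :=
  (Λ.1 = ((0 : ℤ), (0 : ℤ)) ∧ (Λ.2 = Label.ge0 ∨ Λ.2 = Label.eq0)) ∨
    Λ.1 = ((1 : ℤ), (1 : ℤ)) ∨
      (Λ.1 = ((-1 : ℤ), (1 : ℤ)) ∧ (Λ.2 = Label.ge0 ∨ Λ.2 = Label.eq0) ∧ ε (-1, 1) = -1)

instance (ε : Seg → ℤ) (Λ : LSeg) : Decidable (Special ε Λ) := by
  unfold Special; infer_instance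

/-- The condition for `next` to be a successor of `cur` in the initial sequence:
`next ≺ cur`, `e(next) = e(cur) − 1`, and opposite signs when both are centered. -/
def Succ (ε : Seg → ℤ) (cur next : LSeg) : Prop :=
  LSeg.lt next cur ∧ next.1.2 = cur.1.2 - 2 ∧
    (cur.1.1 + cur.1.2 = 0 → next.1.1 + next.1.2 = 0 → ε next.1 = - ε cur.1)

/-- `Δ 1, …, Δ l` is the initial sequence in the algorithm for `(m, ε)`:
`Δ 1` is the `⪯`-largest element of `s(m)` with maximal end; recursively,
`Δ (j+1)` is the `⪯`-largest successor of `Δ j`; the sequence stops when the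
current segment is special or no successor exists. -/
structure IsInitSeq (m : Multiset Seg) (ε : Seg → ℤ) (Δ : ℕ → LSeg) (l : ℕ) : Prop where
  one_le : 1 ≤ l
  mem : ∀ j, 1 ≤ j → j ≤ l → Δ j ∈ smap m
  first_max_end : ∀ Λ ∈ smap m, Λ.1.2 ≤ (Δ 1).1.2
  first_max : ∀ Λ ∈ smap m, Λ.1.2 = (Δ 1).1.2 → LSeg.le Λ (Δ 1)
  not_special : ∀ j, 1 ≤ j → j < l → ¬ Special ε (Δ j)
  succ : ∀ j, 1 ≤ j → j < l → Succ ε (Δ j) (Δ (j + 1))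
  succ_max : ∀ j, 1 ≤ j → j < l → ∀ Λ ∈ smap m, Succ ε (Δ j) Λ → LSeg.le Λ (Δ (j + 1))
  last : Special ε (Δ l) ∨ ∀ Λ ∈ smap m, ¬ Succ ε (Δ l) Λ

/-- The sign `ε₀`: `−1` if the sequence stopped at a special segment, `1` otherwise. -/
def eps0 (ε : Seg → ℤ) (Δ : ℕ → LSeg) (l : ℕ) : ℤ :=
  if Special ε (Δ l) then -1 else 1

/-- The number `n₀` of centered segments of `m`. -/
def nCentered (m : Multiset Seg) : ℕ := (m.filter fun Δ => Δ.1 + Δ.2 = 0).card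

/-- The sign `ε₁` of the centered segment `𝔪₁` in the case `ε₀ = −1`:
`(−1)^(n₀+1)·ε([0,0])` in the integer case, `(−1)^(n₀)` in the half-integer case. -/
def epsOne (m : Multiset Seg) (ε : Seg → ℤ) (Δ : ℕ → LSeg) : ℤ :=
  if (Δ 1).1.2 % 2 = 0 then (-1) ^ (nCentered m + 1) * ε (0, 0)
  else (-1) ^ nCentered m

/-- The signed multisegment `𝔪₁`: if `ε₀ = −1` it is the centered segment
`[−e(Δ₁), e(Δ₁)]` with sign `ε₁`; otherwise it is
`[e(Δ_l), e(Δ₁)] + [−e(Δ₁), −e(Δ_l)]` (non-centered segments carry sign `1`). -/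
def mOne (m : Multiset Seg) (ε : Seg → ℤ) (Δ : ℕ → LSeg) (l : ℕ) : Multiset (Seg × ℤ) :=
  if Special ε (Δ l) then {((-(Δ 1).1.2, (Δ 1).1.2), epsOne m ε Δ)}
  else {(((Δ l).1.2, (Δ 1).1.2), 1), ((-(Δ 1).1.2, -(Δ l).1.2), 1)}

/-- The labeled copies `Δ 1, …, Δ l` whose end gets removed. -/
def DEnd (Δ : ℕ → LSeg) (l : ℕ) : Multiset LSeg := (Finset.Icc 1 l).val.map Δ

/-- The labeled copies (the contragredients of the `Δ j`) whose beginning gets removed. -/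
def DBeg (Δ : ℕ → LSeg) (l : ℕ) : Multiset LSeg := (DEnd Δ l).map LSeg.dual

/-- The labeled copies trimmed on both sides. -/
def DBoth (Δ : ℕ → LSeg) (l : ℕ) : Multiset LSeg := DEnd Δ l ∩ DBeg Δ l

/-- The multisegment `𝔪#`: remove the ends of the `Δ j` and the beginnings of their
contragredients (one labeled copy each, both trims if the copy occurs in both lists),
keep all other copies, and discard empty segments. -/
def mHash (m : Multiset Seg) (Δ : ℕ → LSeg) (l : ℕ) : Multiset Seg :=
  (smap m - DEnd Δ l - (DBeg Δ l - DBoth Δ l)).map Prod.fst +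
    ((DBoth Δ l).map (fun Λ => ((Λ.1.1 + 2, Λ.1.2 - 2) : Seg)) +
        (DEnd Δ l - DBoth Δ l).map (fun Λ => ((Λ.1.1, Λ.1.2 - 2) : Seg)) +
        (DBeg Δ l - DBoth Δ l).map (fun Λ => ((Λ.1.1 + 2, Λ.1.2) : Seg))).filter
      fun Δ0 => Δ0.1 ≤ Δ0.2

/-- The trimmed segment `Λ_{i_j}#` obtained from `Δ j`. -/
def trimAt (Δ : ℕ → LSeg) (l : ℕ) (j : ℕ) : Seg :=
  if Δ j ∈ DBeg Δ l then ((Δ j).1.1 + 2, (Δ j).1.2 - 2)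
  else ((Δ j).1.1, (Δ j).1.2 - 2)

/-- The sign function `ε#` on (centered) segments of `𝔪#`. -/
def epsHash (m : Multiset Seg) (ε : Seg → ℤ) (Δ : ℕ → LSeg) (l : ℕ) : Seg → ℤ :=
  fun Δ0 =>
    if ∃ j ∈ Finset.Icc 1 l, ((Δ j).1.1 + (Δ j).1.2 = 0 ∧ trimAt Δ l j = Δ0) then
      eps0 ε Δ l * ε (Δ0.1 - 2, Δ0.2 + 2)
    else if ∃ j ∈ Finset.Icc 1 l,
        ((Δ j).1.1 + (Δ j).1.2 = 2 ∧ trimAt Δ l j = Δ0 ∧ Δ0 ∉ m) then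
      eps0 ε Δ l
    else if ∃ j ∈ Finset.Icc 1 l,
        ((Δ j).1.1 + (Δ j).1.2 = 2 ∧ trimAt Δ l j = Δ0 ∧ Δ0 ∈ m) then
      -(eps0 ε Δ l) * ε Δ0
    else eps0 ε Δ l * ε Δ0

/-- The good-parity duality algorithm `AD`, as a relation between the input `(m, ε)`
and the output signed multisegment: `AD(0) = 0` and
`AD(𝔪, ε) = (𝔪₁, ε₁) + AD(𝔪#, ε#)`. -/
inductive IsAD : Multiset Seg → (Seg → ℤ) → Multiset (Seg × ℤ) → Prop
  | zero (ε : Seg → ℤ) : IsAD 0 ε 0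
  | step {m : Multiset Seg} {ε : Seg → ℤ} {Δ : ℕ → LSeg} {l : ℕ} {d : Multiset (Seg × ℤ)}
      (hm : m ≠ 0) (hseq : IsInitSeq m ε Δ l)
      (hrec : IsAD (mHash m Δ l) (epsHash m ε Δ l) d) :
      IsAD m ε (mOne m ε Δ l + d)

/-- A valid signed symmetric multisegment in the good-parity setting. -/
structure GoodInput (m : Multiset Seg) (ε : Seg → ℤ) : Prop where
  wf : ∀ Δ0 ∈ m, Seg.WF Δ0
  symm : m.map Seg.dual = m
  parity : ∀ Δ₁ ∈ m, ∀ Δ₂ ∈ m, Δ₁.2 % 2 = Δ₂.2 % 2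
  sign : ∀ Δ0, ε Δ0 = 1 ∨ ε Δ0 = -1

namespace Stmt16

/-- The segment `[-(k+1/2), k+1/2]` in doubled coordinates. -/
def f (k : ℕ) : Seg := ((-(2 * (k : ℤ) + 1), 2 * (k : ℤ) + 1) : Seg)

/-- The multisegment `Σ_{k=0}^{K} f k`. -/
def M (K : ℕ) : Multiset Seg := (Finset.range (K + 1)).val.map f

lemma f_inj : Function.Injective f := by
  intro a b h
  simp only [f, Prod.mk.injEq] at h
  omega

lemma f_sum (k : ℕ) : (f k).1 + (f k).2 = 0 := by simp [f]

lemma f_zero : f 0 = ((-1 : ℤ), (1 : ℤ)) := by simp [f]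

lemma M_nodup (K : ℕ) : (M K).Nodup :=
  (Finset.range (K + 1)).nodup.map f_inj

lemma mem_M {K : ℕ} {Δ0 : Seg} : Δ0 ∈ M K ↔ ∃ k ≤ K, Δ0 = f k := by
  simp only [M, Multiset.mem_map, Finset.mem_val, Finset.mem_range]
  constructor
  · rintro ⟨k, hk, rfl⟩; exact ⟨k, by omega, rfl⟩
  · rintro ⟨k, hk, rfl⟩; exact ⟨k, by omega, rfl⟩

lemma smap_M (K : ℕ) : smap (M K) = (M K).map (fun Δ => (Δ, Label.eq0)) := by
  unfold smap
  have h1 : ((M K).filter fun Δ => ¬ Δ.1 + Δ.2 = 0) = 0 := by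
    rw [Multiset.filter_eq_nil]
    intro a ha
    rcases mem_M.1 ha with ⟨k, _, rfl⟩
    simp [f_sum k]
  have h2 : ((M K).toFinset.filter fun Δ => Δ.1 + Δ.2 = 0) = (M K).toFinset := by
    apply Finset.filter_true_of_mem
    intro a ha
    rcases mem_M.1 (Multiset.mem_toFinset.1 ha) with ⟨k, _, rfl⟩
    exact f_sum k
  rw [h1, h2]
  simp only [Multiset.map_zero, zero_add]
  have h3 : ∀ Δ0 ∈ (M K).toFinset.val,
      (Multiset.replicate ((M K).count Δ0 / 2) (Δ0, Label.le0) +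
        Multiset.replicate ((M K).count Δ0 / 2) (Δ0, Label.ge0) +
        Multiset.replicate ((M K).count Δ0 % 2) (Δ0, Label.eq0)) = {(Δ0, Label.eq0)} := by
    intro Δ0 hΔ0
    have hc : (M K).count Δ0 = 1 :=
      Multiset.count_eq_one_of_mem (M_nodup K) (Multiset.mem_toFinset.1 (by exact hΔ0))
    rw [hc]
    simp
  rw [Multiset.bind_congr h3, Multiset.bind_singleton]
  congr 1
  exact Multiset.dedup_eq_self.mpr (M_nodup K)

lemma mem_smap_M {K : ℕ} {Λ : LSeg} :
    Λ ∈ smap (M K) ↔ ∃ k ≤ K, Λ = (f k, Label.eq0) := by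
  rw [smap_M]
  simp only [Multiset.mem_map]
  constructor
  · rintro ⟨Δ0, hΔ0, rfl⟩
    rcases mem_M.1 hΔ0 with ⟨k, hk, rfl⟩
    exact ⟨k, hk, rfl⟩
  · rintro ⟨k, hk, rfl⟩
    exact ⟨f k, mem_M.2 ⟨k, hk, rfl⟩, rfl⟩

lemma sign_neg {a b : ℤ} (ha : a = 1 ∨ a = -1) (hb : b = 1 ∨ b = -1)
    (h : a * b = -1) : b = -a := by
  rcases ha with rfl | rfl <;> rcases hb with rfl | rfl <;> omega

section InitSeq

variable {K : ℕ} {ε : Seg → ℤ}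

lemma eps_step (hsign : ∀ Δ0 : Seg, ε Δ0 = 1 ∨ ε Δ0 = -1)
    (halt : ∀ k : ℕ, 1 ≤ k → k ≤ K →
      ε (-(2 * (k : ℤ) + 1), 2 * (k : ℤ) + 1) *
        ε (-(2 * (k : ℤ) - 1), 2 * (k : ℤ) - 1) = -1)
    (k : ℕ) (h : k + 1 ≤ K) : ε (f k) = - ε (f (k + 1)) := by
  have e2 : f k = (-(2 * ((k + 1 : ℕ) : ℤ) - 1), 2 * ((k + 1 : ℕ) : ℤ) - 1) := by
    simp only [f, Prod.mk.injEq]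
    push_cast
    constructor <;> ring
  rw [e2]
  exact sign_neg (hsign _) (hsign _) (halt (k + 1) (by omega) h)

lemma eps_pow (hsign : ∀ Δ0 : Seg, ε Δ0 = 1 ∨ ε Δ0 = -1)
    (h12 : ε (-1, 1) = -1)
    (halt : ∀ k : ℕ, 1 ≤ k → k ≤ K →
      ε (-(2 * (k : ℤ) + 1), 2 * (k : ℤ) + 1) *
        ε (-(2 * (k : ℤ) - 1), 2 * (k : ℤ) - 1) = -1) :
    ∀ k ≤ K, ε (f k) = (-1) ^ (k + 1) := by
  intro k
  induction k with
  | zero => intro _; rw [f_zero]; simpa using h12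
  | succ n ih =>
    intro hn
    have h1 := eps_step hsign halt n hn
    have h2 := ih (by omega)
    have : ε (f (n + 1)) = - ε (f n) := by omega
    rw [this, h2, pow_succ]
    ring

lemma initseq_eq (hsign : ∀ Δ0 : Seg, ε Δ0 = 1 ∨ ε Δ0 = -1)
    (h12 : ε (-1, 1) = -1)
    (halt : ∀ k : ℕ, 1 ≤ k → k ≤ K →
      ε (-(2 * (k : ℤ) + 1), 2 * (k : ℤ) + 1) *
        ε (-(2 * (k : ℤ) - 1), 2 * (k : ℤ) - 1) = -1)
    {Δ : ℕ → LSeg} {l : ℕ} (h : IsInitSeq (M K) ε Δ l) :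
    l = K + 1 ∧ ∀ j, 1 ≤ j → j ≤ l → Δ j = (f (K + 1 - j), Label.eq0) := by
  have key : ∀ j, 1 ≤ j → j ≤ l → j ≤ K + 1 → Δ j = (f (K + 1 - j), Label.eq0) := by
    intro j
    induction j with
    | zero => omega
    | succ n ih =>
      intro h1 h2 h3
      rcases Nat.eq_zero_or_pos n with hn | hn
      · subst hn
        rcases mem_smap_M.1 (h.mem 1 le_rfl h2) with ⟨k, hk, hΔ1⟩
        have hmax := h.first_max_end (f K, Label.eq0) (mem_smap_M.2 ⟨K, le_rfl, rfl⟩)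
        rw [hΔ1] at hmax
        have hkK : k = K := by simp only [f] at hmax; omega
        subst hkK
        simpa using hΔ1
      · have hΔn := ih hn (by omega) (by omega)
        have hs := h.succ n hn (by omega)
        rcases mem_smap_M.1 (h.mem (n + 1) (by omega) h2) with ⟨k', hk', hΔ⟩
        have hend := hs.2.1
        rw [hΔ, hΔn] at hend
        simp only [f] at hend
        have hk'val : k' = K - n := by omega
        have hidx : K + 1 - (n + 1) = K - n := by omega
        rw [hΔ, hk'val, hidx]
  have hlK : l ≤ K + 1 := by
    by_contra hl
    push_neg at hl
    have h1 := key (K + 1) (by omega) (by omega) le_rfl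
    apply h.not_special (K + 1) (by omega) (by omega)
    rw [h1, Nat.sub_self, f_zero]
    exact Or.inr (Or.inr ⟨rfl, Or.inr rfl, h12⟩)
  have hKl : K + 1 ≤ l := by
    by_contra hl
    push_neg at hl
    have hΔl := key l h.one_le le_rfl (by omega)
    have h1l : 1 ≤ K + 1 - l := by omega
    rcases h.last with hsp | hns
    · rw [hΔl] at hsp
      rcases hsp with ⟨h1, _⟩ | h1 | ⟨h1, _⟩ <;>
        (simp only [f, Prod.mk.injEq] at h1; omega)
    · apply hns (f (K - l), Label.eq0) (mem_smap_M.2 ⟨K - l, by omega, rfl⟩)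
      rw [hΔl]
      refine ⟨⟨?_, ?_⟩, ?_, ?_⟩
      · right
        refine ⟨rfl, ?_⟩
        simp [if_pos rfl, f]
        omega
      · intro hcon
        have := congrArg (fun Λ => Λ.1.2) hcon
        simp [f] at this
        omega
      · simp [f]
        omega
      · intro _ _
        have hidx : K - l + 1 = K + 1 - l := by omega
        rw [← hidx]
        have hone := h.one_le
        exact eps_step hsign halt (K - l) (by omega)
  have hlval : l = K + 1 := by omega
  exact ⟨hlval, fun j hj1 hj2 => key j hj1 hj2 (by omega)⟩

end InitSeq

section Computation

variable {K : ℕ} {ε : Seg → ℤ} {Δ : ℕ → LSeg}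

lemma Icc_reflect (K : ℕ) :
    (Finset.Icc 1 (K + 1)).val.map (fun j => K + 1 - j) = (Finset.range (K + 1)).val := by
  rw [Multiset.Nodup.ext]
  · intro k
    simp only [Multiset.mem_map, Finset.mem_val, Finset.mem_Icc, Finset.mem_range]
    constructor
    · rintro ⟨j, hj, rfl⟩; omega
    · intro hk; exact ⟨K + 1 - k, by omega, by omega⟩
  · apply Multiset.Nodup.map_on _ (Finset.Icc 1 (K + 1)).nodup
    intro x hx y hy hxy
    simp only [Finset.mem_val, Finset.mem_Icc] at hx hy
    omega
  · exact (Finset.range (K + 1)).nodup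

/-- The canonical labeled multiset. -/
def S (K : ℕ) : Multiset LSeg := (Finset.range (K + 1)).val.map (fun k => (f k, Label.eq0))

lemma smap_M_S (K : ℕ) : smap (M K) = S K := by
  rw [smap_M]; unfold M S; rw [Multiset.map_map]; rfl

lemma DEnd_S (hΔ : ∀ j, 1 ≤ j → j ≤ K + 1 → Δ j = (f (K + 1 - j), Label.eq0)) :
    DEnd Δ (K + 1) = S K := by
  unfold DEnd S
  rw [Multiset.map_congr rfl (fun j hj => hΔ j
    (by simpa using (Finset.mem_Icc.1 (by simpa using hj)).1)
    (by simpa using (Finset.mem_Icc.1 (by simpa using hj)).2))]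
  rw [show (fun j => (f (K + 1 - j), Label.eq0)) =
      (fun k => (f k, Label.eq0)) ∘ (fun j => K + 1 - j) from rfl]
  rw [← Multiset.map_map, Icc_reflect]

lemma dual_f (k : ℕ) : LSeg.dual (f k, Label.eq0) = (f k, Label.eq0) := by
  simp [LSeg.dual, Seg.dual, f]

lemma DBeg_S (hΔ : ∀ j, 1 ≤ j → j ≤ K + 1 → Δ j = (f (K + 1 - j), Label.eq0)) :
    DBeg Δ (K + 1) = S K := by
  unfold DBeg
  rw [DEnd_S hΔ]
  unfold S
  rw [Multiset.map_map]
  apply Multiset.map_congr rfl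
  intro k _
  exact dual_f k

lemma mHash_eq (hΔ : ∀ j, 1 ≤ j → j ≤ K + 1 → Δ j = (f (K + 1 - j), Label.eq0)) :
    mHash (M K) Δ (K + 1) = (Finset.range K).val.map f := by
  unfold mHash DBoth
  rw [DEnd_S hΔ, DBeg_S hΔ, smap_M_S, show S K ∩ S K = S K from
      Multiset.ext.2 fun a => by rw [Multiset.count_inter]; omega,
    show S K - S K = 0 from
      Multiset.ext.2 fun a => by rw [Multiset.count_sub]; simp]
  simp only [Multiset.sub_zero, Multiset.map_zero, add_zero, zero_add]
  unfold S
  rw [Multiset.map_map]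
  have hrange : (Finset.range (K + 1)).val =
      (0 : ℕ) ::ₘ (Finset.range K).val.map Nat.succ := by
    rw [Finset.range_val, Finset.range_val]
    have := List.range_succ_eq_map (n := K)
    simp [Multiset.range, this]
  rw [hrange, Multiset.map_cons, Multiset.filter_cons_of_neg, Multiset.map_map]
  · rw [Multiset.filter_eq_self.2]
    · apply Multiset.map_congr rfl
      intro k _
      simp only [Function.comp_apply, f, Prod.mk.injEq]
      constructor <;> push_cast <;> ring
    · intro a ha
      rcases Multiset.mem_map.1 ha with ⟨k, _, rfl⟩
      simp only [Function.comp_apply, f]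
      push_cast
      omega
  · simp [f]

lemma special_last (h12 : ε (-1, 1) = -1)
    (hΔ : ∀ j, 1 ≤ j → j ≤ K + 1 → Δ j = (f (K + 1 - j), Label.eq0)) :
    Special ε (Δ (K + 1)) := by
  rw [hΔ (K + 1) (by omega) le_rfl, Nat.sub_self, f_zero]
  exact Or.inr (Or.inr ⟨rfl, Or.inr rfl, h12⟩)

lemma mOne_eq (hsign : ∀ Δ0 : Seg, ε Δ0 = 1 ∨ ε Δ0 = -1)
    (h12 : ε (-1, 1) = -1)
    (halt : ∀ k : ℕ, 1 ≤ k → k ≤ K →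
      ε (-(2 * (k : ℤ) + 1), 2 * (k : ℤ) + 1) *
        ε (-(2 * (k : ℤ) - 1), 2 * (k : ℤ) - 1) = -1)
    (hΔ : ∀ j, 1 ≤ j → j ≤ K + 1 → Δ j = (f (K + 1 - j), Label.eq0)) :
    mOne (M K) ε Δ (K + 1) = {(f K, ε (f K))} := by
  unfold mOne
  rw [if_pos (special_last h12 hΔ)]
  have h1 : Δ 1 = (f K, Label.eq0) := by
    have := hΔ 1 le_rfl (by omega)
    simpa using this
  rw [h1]
  have hε : epsOne (M K) ε Δ = ε (f K) := by
    unfold epsOne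
    rw [h1]
    have hodd : ¬ ((f K, Label.eq0) : LSeg).1.2 % 2 = 0 := by
      simp only [f]; omega
    rw [if_neg hodd]
    have hn : nCentered (M K) = K + 1 := by
      unfold nCentered
      rw [Multiset.filter_eq_self.2]
      · simp [M]
      · intro a ha
        rcases mem_M.1 ha with ⟨k, _, rfl⟩
        exact f_sum k
    rw [hn, eps_pow hsign h12 halt K le_rfl]
  rw [hε]
  rfl

lemma eps0_eq (h12 : ε (-1, 1) = -1)
    (hΔ : ∀ j, 1 ≤ j → j ≤ K + 1 → Δ j = (f (K + 1 - j), Label.eq0)) :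
    eps0 ε Δ (K + 1) = -1 := by
  unfold eps0
  rw [if_pos (special_last h12 hΔ)]

lemma eps0_sign (ε : Seg → ℤ) (Δ : ℕ → LSeg) (l : ℕ) :
    eps0 ε Δ l = 1 ∨ eps0 ε Δ l = -1 := by
  unfold eps0; split <;> simp

lemma epsHash_sign (m : Multiset Seg) (ε : Seg → ℤ) (Δ : ℕ → LSeg) (l : ℕ)
    (hsign : ∀ Δ0 : Seg, ε Δ0 = 1 ∨ ε Δ0 = -1) (Δ0 : Seg) :
    epsHash m ε Δ l Δ0 = 1 ∨ epsHash m ε Δ l Δ0 = -1 := by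
  unfold epsHash
  have h0 := eps0_sign ε Δ l
  split_ifs
  · rcases h0 with h | h <;> rcases hsign (Δ0.1 - 2, Δ0.2 + 2) with h' | h' <;>
      rw [h, h'] <;> norm_num
  · exact h0
  · rcases h0 with h | h <;> rcases hsign Δ0 with h' | h' <;> rw [h, h'] <;> norm_num
  · rcases h0 with h | h <;> rcases hsign Δ0 with h' | h' <;> rw [h, h'] <;> norm_num

lemma epsHash_eval (hsign : ∀ Δ0 : Seg, ε Δ0 = 1 ∨ ε Δ0 = -1)
    (h12 : ε (-1, 1) = -1)
    (halt : ∀ k : ℕ, 1 ≤ k → k ≤ K →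
      ε (-(2 * (k : ℤ) + 1), 2 * (k : ℤ) + 1) *
        ε (-(2 * (k : ℤ) - 1), 2 * (k : ℤ) - 1) = -1)
    (hΔ : ∀ j, 1 ≤ j → j ≤ K + 1 → Δ j = (f (K + 1 - j), Label.eq0))
    (k : ℕ) (hk : k + 1 ≤ K) :
    epsHash (M K) ε Δ (K + 1) (f k) = ε (f k) := by
  unfold epsHash
  have hj : K - k ∈ Finset.Icc 1 (K + 1) := by
    rw [Finset.mem_Icc]; omega
  have hΔj : Δ (K - k) = (f (k + 1), Label.eq0) := by
    rw [hΔ (K - k) (by omega) (by omega)]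
    congr 2
    omega
  have hmem : Δ (K - k) ∈ DBeg Δ (K + 1) := by
    rw [DBeg_S hΔ]
    unfold S
    rw [hΔj]
    exact Multiset.mem_map.2 ⟨k + 1, by simp [Finset.mem_range]; omega, rfl⟩
  have htrim : trimAt Δ (K + 1) (K - k) = f k := by
    unfold trimAt
    rw [if_pos hmem, hΔj]
    simp only [f, Prod.mk.injEq]
    constructor <;> push_cast <;> ring
  have hcond : ∃ j ∈ Finset.Icc 1 (K + 1),
      ((Δ j).1.1 + (Δ j).1.2 = 0 ∧ trimAt Δ (K + 1) j = f k) := by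
    refine ⟨K - k, hj, ?_, htrim⟩
    rw [hΔj]
    exact f_sum (k + 1)
  rw [if_pos hcond, eps0_eq h12 hΔ]
  have harg : (((f k).1 - 2, (f k).2 + 2) : Seg) = f (k + 1) := by
    simp only [f, Prod.mk.injEq]
    constructor <;> push_cast <;> ring
  rw [harg]
  have := eps_step hsign halt k hk
  omega

end Computation

lemma isad_zero {ε : Seg → ℤ} {d : Multiset (Seg × ℤ)} (h : IsAD 0 ε d) : d = 0 := by
  cases h with
  | zero => rfl
  | step hm _ _ => exact absurd rfl hm

lemma step_analysis (K : ℕ) (ε : Seg → ℤ)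
    (hsign : ∀ Δ0 : Seg, ε Δ0 = 1 ∨ ε Δ0 = -1)
    (h12 : ε (-1, 1) = -1)
    (halt : ∀ k : ℕ, 1 ≤ k → k ≤ K →
      ε (-(2 * (k : ℤ) + 1), 2 * (k : ℤ) + 1) *
        ε (-(2 * (k : ℤ) - 1), 2 * (k : ℤ) - 1) = -1)
    {d : Multiset (Seg × ℤ)} (had : IsAD (M K) ε d) :
    ∃ (ε' : Seg → ℤ) (d' : Multiset (Seg × ℤ)),
      (∀ Δ0 : Seg, ε' Δ0 = 1 ∨ ε' Δ0 = -1) ∧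
      (∀ k, k + 1 ≤ K → ε' (f k) = ε (f k)) ∧
      IsAD ((Finset.range K).val.map f) ε' d' ∧
      d = (f K, ε (f K)) ::ₘ d' := by
  have hM : M K ≠ 0 := by
    intro h0
    have : f 0 ∈ M K := mem_M.2 ⟨0, by omega, rfl⟩
    rw [h0] at this
    exact absurd this (Multiset.notMem_zero _)
  generalize hMK : M K = m0 at had
  cases had with
  | zero => exact absurd hMK hM
  | step hm hseq hrec =>
    rename_i Δ l d'
    subst hMK
    obtain ⟨hl, hΔ⟩ := initseq_eq hsign h12 halt hseq
    subst hl
    refine ⟨epsHash (M K) ε Δ (K + 1), d', epsHash_sign _ _ _ _ hsign,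
      fun k hk => epsHash_eval hsign h12 halt hΔ k hk, ?_, ?_⟩
    · rw [← mHash_eq hΔ]; exact hrec
    · rw [mOne_eq hsign h12 halt hΔ, Multiset.singleton_add]

lemma main (K : ℕ) : ∀ (ε : Seg → ℤ),
    (∀ Δ0 : Seg, ε Δ0 = 1 ∨ ε Δ0 = -1) →
    ε (-1, 1) = -1 →
    (∀ k : ℕ, 1 ≤ k → k ≤ K →
      ε (-(2 * (k : ℤ) + 1), 2 * (k : ℤ) + 1) *
        ε (-(2 * (k : ℤ) - 1), 2 * (k : ℤ) - 1) = -1) →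
    ∀ d : Multiset (Seg × ℤ), IsAD (M K) ε d →
    d = (Finset.range (K + 1)).val.map (fun k => (f k, ε (f k))) := by
  induction K with
  | zero =>
    intro ε hsign h12 halt d had
    obtain ⟨ε', d', _, _, had', hd⟩ := step_analysis 0 ε hsign h12 halt had
    have hd0 : d' = 0 := isad_zero (by simpa using had')
    subst hd0
    rw [hd]
    simp
  | succ n ih =>
    intro ε hsign h12 halt d had
    obtain ⟨ε', d', hsign', heq, had', hd⟩ := step_analysis (n + 1) ε hsign h12 halt had
    have h12' : ε' (-1, 1) = -1 := by
      have h := heq 0 (by omega)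
      rw [f_zero] at h
      exact h.trans h12
    have halt' : ∀ k : ℕ, 1 ≤ k → k ≤ n →
        ε' (-(2 * (k : ℤ) + 1), 2 * (k : ℤ) + 1) *
          ε' (-(2 * (k : ℤ) - 1), 2 * (k : ℤ) - 1) = -1 := by
      intro k hk1 hk2
      have e1 : ((-(2 * (k : ℤ) + 1), 2 * (k : ℤ) + 1) : Seg) = f k := rfl
      have e2 : ((-(2 * (k : ℤ) - 1), 2 * (k : ℤ) - 1) : Seg) = f (k - 1) := by
        simp only [f, Prod.mk.injEq]
        have : ((k - 1 : ℕ) : ℤ) = (k : ℤ) - 1 := by omega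
        rw [this]
        constructor <;> ring
      rw [e1, e2, heq k (by omega), heq (k - 1) (by omega), ← e1, ← e2]
      exact halt k hk1 (by omega)
    have hd' := ih ε' hsign' h12' halt' d' (by exact had')
    rw [hd, hd']
    have hmc : (Finset.range (n + 1)).val.map (fun k => (f k, ε' (f k))) =
        (Finset.range (n + 1)).val.map (fun k => (f k, ε (f k))) := by
      apply Multiset.map_congr rfl
      intro k hk
      have hk1 := Finset.mem_range.1 (cast Finset.mem_val hk)
      rw [heq k (by omega)]
    rw [hmc]
    rw [Finset.range_val, Finset.range_val, Multiset.range_succ (n + 1), Multiset.map_cons]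

end Stmt16

/-- Lemma 10.1.2: in the half-integer case, with
`𝔪 = Σ_{y=1/2}^{y₀} [−y,y]` (here `y₀ = K + 1/2`), `ε([−1/2,1/2]) = −1` and
alternating signs, one has `AD(𝔪, ε) = (𝔪, ε)`. -/
theorem stmt16 (K : ℕ) (ε : Seg → ℤ)
    (hsign : ∀ Δ0 : Seg, ε Δ0 = 1 ∨ ε Δ0 = -1)
    (h12 : ε (-1, 1) = -1)
    (halt : ∀ k : ℕ, 1 ≤ k → k ≤ K →
      ε (-(2 * (k : ℤ) + 1), 2 * (k : ℤ) + 1) *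
        ε (-(2 * (k : ℤ) - 1), 2 * (k : ℤ) - 1) = -1)
    (d : Multiset (Seg × ℤ))
    (had : IsAD
      ((Finset.range (K + 1)).val.map
        (fun k => ((-(2 * (k : ℤ) + 1), 2 * (k : ℤ) + 1) : Seg)))
      ε d) :
    d = (Finset.range (K + 1)).val.map (fun k =>
      (((-(2 * (k : ℤ) + 1), 2 * (k : ℤ) + 1) : Seg),
        ε (-(2 * (k : ℤ) + 1), 2 * (k : ℤ) + 1))) := by
  have coer : ∀ {α : Type} (g : ℤ → α) (s : Multiset ℕ),
      (Multiset.map g (do let a ← s; pure ((a : ℕ) : ℤ))) =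
        s.map (fun a => g ((a : ℕ) : ℤ)) := by
    intro α g s
    show Multiset.map g (s.bind fun a : ℕ => ({(a : ℤ)} : Multiset ℤ)) = _
    rw [Multiset.bind_singleton, Multiset.map_map]
    rfl
  rw [coer] at had
  rw [coer]
  exact Stmt16.main K ε hsign h12 halt d had

end AZ
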